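/- Corollary 1 (cancellation of thermodynamic vorticity in Korteweg fluids): For a steady non-isentropic flow of a Korteweg fluid satisfying the steady momentum balance ρ (Dv)v = div T with T = −p̄ I − T^E, if at every point of B one has ϑ grad η − grad h = grad(ι² div(ρ ∂_gφ) + ∂_gφ·grad ι) − ι grad(v·grad Π − ∂_ιχ), then ω × v = 0 throughout B. -/

import Mathlib

noncomputable section

/-- Points of ℝ³. -/
abbrev V3 : Type := Fin 3 → ℝ

/-- Partial derivative ∂ᵢ of a scalar field on ℝ³. -/
def pd (i : Fin 3) (f : V3 → ℝ) (x : V3) : ℝ :=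
  fderiv ℝ f x (Pi.single i 1)

/-- Cross product on ℝ³. -/
def cross (a b : V3) : V3 :=
  ![a 1 * b 2 - a 2 * b 1,
    a 2 * b 0 - a 0 * b 2,
    a 0 * b 1 - a 1 * b 0]

/-- Curl of a vector field on ℝ³. -/
def curl (u : V3 → V3) (x : V3) : V3 :=
  ![pd 1 (fun y => u y 2) x - pd 2 (fun y => u y 1) x,
    pd 2 (fun y => u y 0) x - pd 0 (fun y => u y 2) x,
    pd 0 (fun y => u y 1) x - pd 1 (fun y => u y 0) x]

/-- A steady Korteweg fluid on an open set `B ⊆ ℝ³`: smooth fields `ρ > 0`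
(mass density), `η` (entropy), `v` (velocity), a smooth potential
`φ = φ(ι, g, η)` and a smooth kinetic co-energy `χ = χ(ι, ι̇)`. -/
structure KortewegFluid where
  B : Set V3
  hB : IsOpen B
  ρ : V3 → ℝ
  η : V3 → ℝ
  v : V3 → V3
  φ : ℝ × V3 × ℝ → ℝ
  χ : ℝ × ℝ → ℝ
  hρ : ContDiffOn ℝ (⊤ : ℕ∞) ρ B
  hη : ContDiffOn ℝ (⊤ : ℕ∞) η B
  hv : ContDiffOn ℝ (⊤ : ℕ∞) v B
  hφ : ContDiff ℝ (⊤ : ℕ∞) φ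
  hχ : ContDiff ℝ (⊤ : ℕ∞) χ
  hρpos : ∀ x ∈ B, 0 < ρ x

namespace KortewegFluid

variable (K : KortewegFluid)

/-- Specific volume `ι = 1/ρ`. -/
def ι (x : V3) : ℝ := (K.ρ x)⁻¹

/-- The point `(ι(x), grad ι(x), η(x))` at which `φ` and its partial
derivatives are evaluated. -/
def pt (x : V3) : ℝ × V3 × ℝ := (K.ι x, fun i => pd i K.ι x, K.η x)

/-- `∂_ιφ` evaluated along the fields. -/
def dφι (x : V3) : ℝ := fderiv ℝ K.φ (K.pt x) (1, 0, 0)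

/-- `∂_gφ` (vector of partial derivatives of `φ` w.r.t. the gradient slot)
evaluated along the fields. -/
def dφg (x : V3) : V3 := fun j => fderiv ℝ K.φ (K.pt x) (0, Pi.single j 1, 0)

/-- Temperature `ϑ = ∂_ηφ` evaluated along the fields. -/
def temp (x : V3) : ℝ := fderiv ℝ K.φ (K.pt x) (0, 0, 1)

/-- Convective rate `ι̇ = v · grad ι`. -/
def ιdot (x : V3) : ℝ := ∑ j, K.v x j * pd j K.ι x

/-- `∂_ιχ` evaluated along the fields. -/
def dχι (x : V3) : ℝ := fderiv ℝ K.χ (K.ι x, K.ιdot x) (1, 0)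

/-- The field `Π : x ↦ ∂_ι̇χ(ι(x), ι̇(x))`. -/
def Pi' (x : V3) : ℝ := fderiv ℝ K.χ (K.ι x, K.ιdot x) (0, 1)

/-- `div(ρ ∂_gφ)`. -/
def divρg (x : V3) : ℝ := ∑ j, pd j (fun y => K.ρ y * K.dφg y j) x

/-- Kinetic pressure `p̌ = ρι (v·grad Π) − ∂_ιχ`. -/
def pcheck (x : V3) : ℝ :=
  K.ρ x * K.ι x * (∑ j, K.v x j * pd j K.Pi' x) - K.dχι x

/-- Pressure `p̄ = −ρι ∂_ιφ + ι div(ρ ∂_gφ) − p̌`. -/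
def pbar (x : V3) : ℝ :=
  -(K.ρ x * K.ι x * K.dφι x) + K.ι x * K.divρg x - K.pcheck x

/-- Specific enthalpy `ξ = φ − ι ∂_ιφ − ∂_gφ · grad ι`. -/
def ξ (x : V3) : ℝ :=
  K.φ (K.pt x) - K.ι x * K.dφι x - ∑ j, K.dφg x j * pd j K.ι x

/-- Total enthalpy `h = (1/2)|v|² + ξ`. -/
def htot (x : V3) : ℝ := (1 / 2) * (∑ k, (K.v x k) ^ 2) + K.ξ x

/-- Korteweg stress `T^E = grad ι ⊗ ρ ∂_gφ`. -/
def TE (x : V3) (i j : Fin 3) : ℝ := pd i K.ι x * (K.ρ x * K.dφg x j)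

/-- Steady momentum balance `ρ (Dv)v = div T` with `T = −p̄ I − T^E`
(stated componentwise). -/
def MomentumBalance : Prop :=
  ∀ x ∈ K.B, ∀ i : Fin 3,
    K.ρ x * ∑ j, pd j (fun y => K.v y i) x * K.v x j
      = ∑ j, pd j (fun y => -(K.pbar y) * (if i = j then (1:ℝ) else 0) - K.TE y i j) x

end KortewegFluid

open scoped Topology

namespace KHelp

lemma top_add_one_le : ((⊤:ℕ∞) : WithTop ℕ∞) + 1 ≤ ((⊤:ℕ∞) : WithTop ℕ∞) := by
  exact_mod_cast le_top

lemma one_le_top : ((⊤:ℕ∞) : WithTop ℕ∞) ≠ 0 := by simp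

lemma two_le_top : minSmoothness ℝ 2 ≤ ((⊤:ℕ∞) : WithTop ℕ∞) := by
  rw [minSmoothness_of_isRCLikeNormedField]; norm_cast

lemma pd_congr {f g : V3 → ℝ} {x : V3} (h : f =ᶠ[𝓝 x] g) (i : Fin 3) :
    pd i f x = pd i g x := by
  unfold pd; rw [h.fderiv_eq]

lemma pd_add {f g : V3 → ℝ} {x : V3} (hf : DifferentiableAt ℝ f x)
    (hg : DifferentiableAt ℝ g x) (i : Fin 3) :
    pd i (fun y => f y + g y) x = pd i f x + pd i g x := by
  unfold pd; rw [fderiv_fun_add hf hg]; rfl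

lemma pd_sub {f g : V3 → ℝ} {x : V3} (hf : DifferentiableAt ℝ f x)
    (hg : DifferentiableAt ℝ g x) (i : Fin 3) :
    pd i (fun y => f y - g y) x = pd i f x - pd i g x := by
  unfold pd; rw [fderiv_fun_sub hf hg]; rfl

lemma pd_neg {f : V3 → ℝ} {x : V3} (i : Fin 3) :
    pd i (fun y => -f y) x = -pd i f x := by
  unfold pd; rw [fderiv_fun_neg]; rfl

lemma pd_mul {f g : V3 → ℝ} {x : V3} (hf : DifferentiableAt ℝ f x)
    (hg : DifferentiableAt ℝ g x) (i : Fin 3) :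
    pd i (fun y => f y * g y) x = f x * pd i g x + g x * pd i f x := by
  unfold pd; rw [fderiv_fun_mul hf hg]; simp [smul_eq_mul]

lemma pd_const_mul {f : V3 → ℝ} {x : V3} (hf : DifferentiableAt ℝ f x) (c : ℝ) (i : Fin 3) :
    pd i (fun y => c * f y) x = c * pd i f x := by
  unfold pd; rw [fderiv_const_mul hf c]; simp [smul_eq_mul]

lemma pd_sum {α : Type*} {s : Finset α} {f : α → V3 → ℝ} {x : V3}
    (h : ∀ a ∈ s, DifferentiableAt ℝ (f a) x) (i : Fin 3) :
    pd i (fun y => ∑ a ∈ s, f a y) x = ∑ a ∈ s, pd i (f a) x := by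
  unfold pd; rw [fderiv_fun_sum h]; simp

lemma pd_const {x : V3} (c : ℝ) (i : Fin 3) : pd i (fun _ => c) x = 0 := by
  unfold pd; rw [fderiv_fun_const]; simp

lemma contDiffAt_pd {f : V3 → ℝ} {x : V3} (hf : ContDiffAt ℝ (⊤:ℕ∞) f x) (j : Fin 3) :
    ContDiffAt ℝ (⊤:ℕ∞) (fun y => pd j f y) x :=
  (hf.fderiv_right top_add_one_le).clm_apply contDiffAt_const

lemma clm_decomp (L : ℝ × V3 × ℝ →L[ℝ] ℝ) (a : ℝ) (b : V3) (c : ℝ) :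
    L (a, b, c) = a * L (1, 0, 0) + (∑ j, b j * L (0, Pi.single j 1, 0)) + c * L (0, 0, 1) := by
  have h : (a, b, c) = a • ((1:ℝ), (0:V3), (0:ℝ))
      + (∑ j, b j • (((0:ℝ), Pi.single j 1, (0:ℝ)) : ℝ × V3 × ℝ)) + c • ((0:ℝ), (0:V3), (1:ℝ)) := by
    ext
    · simp [Prod.fst_sum]
    · rename_i k
      simp [Prod.snd_sum, Fin.sum_univ_three, Pi.single_apply]
      fin_cases k <;> simp
    · simp [Prod.snd_sum]
  rw [h, map_add, map_add, map_smul, map_smul, map_sum]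
  have hterm : ∀ j : Fin 3, L ((0:ℝ), (b j • (Pi.single j 1 : V3)), (0:ℝ)) = b j * L (0, Pi.single j 1, 0) := by
    intro j
    have h2 : ((0:ℝ), (b j • (Pi.single j 1 : V3)), (0:ℝ))
        = b j • (((0:ℝ), (Pi.single j 1 : V3), (0:ℝ)) : ℝ × V3 × ℝ) := by simp
    rw [h2, map_smul, smul_eq_mul]
  simp [hterm, smul_eq_mul]

lemma pd_comp3 {φ : ℝ × V3 × ℝ → ℝ} {a : V3 → ℝ} {b : V3 → V3} {c : V3 → ℝ} {x : V3}
    (hφ : ContDiff ℝ (⊤:ℕ∞) φ) (ha : DifferentiableAt ℝ a x)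
    (hb : ∀ j, DifferentiableAt ℝ (fun y => b y j) x) (hc : DifferentiableAt ℝ c x) (i : Fin 3) :
    pd i (fun y => φ (a y, b y, c y)) x
      = pd i a x * fderiv ℝ φ (a x, b x, c x) (1, 0, 0)
        + (∑ j, pd i (fun y => b y j) x * fderiv ℝ φ (a x, b x, c x) (0, Pi.single j 1, 0))
        + pd i c x * fderiv ℝ φ (a x, b x, c x) (0, 0, 1) := by
  have hbd : DifferentiableAt ℝ b x := differentiableAt_pi.2 hb
  have hg : DifferentiableAt ℝ (fun y => (a y, b y, c y)) x := ha.prodMk (hbd.prodMk hc)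
  have hcomp : fderiv ℝ (fun y => φ (a y, b y, c y)) x
      = (fderiv ℝ φ (a x, b x, c x)).comp (fderiv ℝ (fun y => (a y, b y, c y)) x) := by
    exact fderiv_comp x (hφ.differentiable one_le_top |>.differentiableAt) hg
  have hprod : fderiv ℝ (fun y => (a y, b y, c y)) x
      = (fderiv ℝ a x).prod ((fderiv ℝ b x).prod (fderiv ℝ c x)) :=
    (ha.hasFDerivAt.prodMk (hbd.hasFDerivAt.prodMk hc.hasFDerivAt)).fderiv
  have hbap : fderiv ℝ b x (Pi.single i 1) = fun j => pd i (fun y => b y j) x := by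
    rw [fderiv_pi hb]; rfl
  show (fderiv ℝ (fun y => φ (a y, b y, c y)) x) (Pi.single i 1) = _
  rw [hcomp, hprod]
  simp only [ContinuousLinearMap.comp_apply, ContinuousLinearMap.prod_apply]
  rw [hbap]
  exact clm_decomp _ _ _ _

lemma pd_pd {f : V3 → ℝ} {x : V3} (hf : ContDiffAt ℝ (⊤:ℕ∞) f x) (i j : Fin 3) :
    pd i (fun y => pd j f y) x = fderiv ℝ (fderiv ℝ f) x (Pi.single i 1) (Pi.single j 1) := by
  have hdf : DifferentiableAt ℝ (fderiv ℝ f) x :=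
    (hf.fderiv_right top_add_one_le).differentiableAt one_le_top
  show (fderiv ℝ (fun y => (fderiv ℝ f y) ((fun _ => (Pi.single j 1 : V3)) y)) x) (Pi.single i 1) = _
  rw [fderiv_clm_apply hdf (differentiableAt_const _)]
  simp

lemma pd_symm {f : V3 → ℝ} {x : V3} (hf : ContDiffAt ℝ (⊤:ℕ∞) f x) (i j : Fin 3) :
    pd i (fun y => pd j f y) x = pd j (fun y => pd i f y) x := by
  rw [pd_pd hf i j, pd_pd hf j i]
  exact (hf.isSymmSndFDerivAt two_le_top).eq _ _

end KHelp

open KHelp in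
/-- Corollary 1, cancellation of thermodynamic vorticity:
for a steady non-isentropic flow of a Korteweg fluid satisfying the steady
momentum balance, if at every point of `B` one has
`ϑ grad η − grad h = grad(ι² div(ρ ∂_gφ) + ∂_gφ·grad ι) − ι grad(v·grad Π − ∂_ιχ)`,
then `ω × v = 0` throughout `B`. -/
theorem korteweg_cancellation_of_vorticity (K : KortewegFluid)
    (hbal : K.MomentumBalance)
    (hcancel : ∀ x ∈ K.B, ∀ i : Fin 3,
      K.temp x * pd i K.η x - pd i K.htot x
        = pd i (fun y => (K.ι y) ^ 2 * K.divρg y + ∑ j, K.dφg y j * pd j K.ι y) x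
          - K.ι x * pd i (fun y => (∑ j, K.v y j * pd j K.Pi' y) - K.dχι y) x) :
    ∀ x ∈ K.B, ∀ i : Fin 3, cross (curl K.v x) (K.v x) i = 0 := by
  intro x hx i
  have hmem : K.B ∈ nhds x := K.hB.mem_nhds hx
  have hρx : ContDiffAt ℝ (⊤:ℕ∞) K.ρ x := K.hρ.contDiffAt hmem
  have hηx : ContDiffAt ℝ (⊤:ℕ∞) K.η x := K.hη.contDiffAt hmem
  have hvx : ∀ k : Fin 3, ContDiffAt ℝ (⊤:ℕ∞) (fun y => K.v y k) x :=
    contDiffAt_pi.1 (K.hv.contDiffAt hmem)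
  have hρne : K.ρ x ≠ 0 := ne_of_gt (K.hρpos x hx)
  have hιx : ContDiffAt ℝ (⊤:ℕ∞) K.ι x := hρx.inv hρne
  have hpdι : ∀ j, ContDiffAt ℝ (⊤:ℕ∞) (fun y => pd j K.ι y) x := fun j => contDiffAt_pd hιx j
  have hptx : ContDiffAt ℝ (⊤:ℕ∞) K.pt x := hιx.prodMk ((contDiffAt_pi.2 hpdι).prodMk hηx)
  have hdφιx : ContDiffAt ℝ (⊤:ℕ∞) K.dφι x :=
    ((K.hφ.fderiv_right top_add_one_le).contDiffAt.comp x hptx).clm_apply contDiffAt_const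
  have hdφgx : ∀ j : Fin 3, ContDiffAt ℝ (⊤:ℕ∞) (fun y => K.dφg y j) x := fun j =>
    ((K.hφ.fderiv_right top_add_one_le).contDiffAt.comp x hptx).clm_apply contDiffAt_const
  have hFx : ∀ j : Fin 3, ContDiffAt ℝ (⊤:ℕ∞) (fun y => K.ρ y * K.dφg y j) x := fun j =>
    hρx.mul (hdφgx j)
  have hdivx : ContDiffAt ℝ (⊤:ℕ∞) K.divρg x :=
    ContDiffAt.sum (fun j _ => contDiffAt_pd (hFx j) j)
  have hιdotx : ContDiffAt ℝ (⊤:ℕ∞) K.ιdot x :=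
    ContDiffAt.sum (fun j _ => (hvx j).mul (hpdι j))
  have hPi'x : ContDiffAt ℝ (⊤:ℕ∞) K.Pi' x :=
    ((K.hχ.fderiv_right top_add_one_le).contDiffAt.comp x (hιx.prodMk hιdotx)).clm_apply
      contDiffAt_const
  have hdχιx : ContDiffAt ℝ (⊤:ℕ∞) K.dχι x :=
    ((K.hχ.fderiv_right top_add_one_le).contDiffAt.comp x (hιx.prodMk hιdotx)).clm_apply
      contDiffAt_const
  have hpdPi' : ∀ j : Fin 3, ContDiffAt ℝ (⊤:ℕ∞) (fun y => pd j K.Pi' y) x := fun j =>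
    contDiffAt_pd hPi'x j
  have hPx : ContDiffAt ℝ (⊤:ℕ∞) (fun y => (∑ j, K.v y j * pd j K.Pi' y) - K.dχι y) x :=
    (ContDiffAt.sum (fun j _ => (hvx j).mul (hpdPi' j))).sub hdχιx
  have hGx : ContDiffAt ℝ (⊤:ℕ∞) (fun y => ∑ j, K.dφg y j * pd j K.ι y) x :=
    ContDiffAt.sum (fun j _ => (hdφgx j).mul (hpdι j))
  have hφptx : ContDiffAt ℝ (⊤:ℕ∞) (fun y => K.φ (K.pt y)) x := K.hφ.contDiffAt.comp x hptx
  have hpbarx : ContDiffAt ℝ (⊤:ℕ∞) K.pbar x :=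
    ((((hρx.mul hιx).mul hdφιx).neg).add (hιx.mul hdivx)).sub
      (((hρx.mul hιx).mul (ContDiffAt.sum (fun j _ => (hvx j).mul (hpdPi' j)))).sub hdχιx)
  have hρι : K.ρ x * K.ι x = 1 := mul_inv_cancel₀ hρne
  have hev : K.pbar =ᶠ[𝓝 x]
      fun y => -K.dφι y + K.ι y * K.divρg y - ((∑ j, K.v y j * pd j K.Pi' y) - K.dχι y) := by
    filter_upwards [hρx.continuousAt.eventually_ne hρne] with y hy
    show -(K.ρ y * K.ι y * K.dφι y) + K.ι y * K.divρg y
        - (K.ρ y * K.ι y * (∑ j, K.v y j * pd j K.Pi' y) - K.dχι y) = _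
    rw [show K.ρ y * K.ι y = 1 from mul_inv_cancel₀ hy]
    ring
  have hpbar' : pd i K.pbar x
      = -pd i K.dφι x + (K.ι x * pd i K.divρg x + K.divρg x * pd i K.ι x)
        - pd i (fun y => (∑ j, K.v y j * pd j K.Pi' y) - K.dχι y) x := by
    rw [pd_congr hev i,
      pd_sub ((hdφιx.neg.add (hιx.mul hdivx)).differentiableAt one_le_top)
        (hPx.differentiableAt one_le_top) i,
      pd_add (hdφιx.neg.differentiableAt one_le_top)
        ((hιx.mul hdivx).differentiableAt one_le_top) i,
      pd_neg i,
      pd_mul (hιx.differentiableAt one_le_top) (hdivx.differentiableAt one_le_top) i]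
  have hdiag : ∀ j : Fin 3, pd j (fun y => -K.pbar y * (if i = j then (1:ℝ) else 0)) x
      = if i = j then -pd j K.pbar x else 0 := by
    intro j
    by_cases h : i = j
    · subst h
      simp only [eq_self_iff_true, if_true, mul_one]
      exact pd_neg i
    · simp only [if_neg h, mul_zero]
      exact pd_const 0 j
  have hrhs : ∀ j : Fin 3, pd j (fun y => -K.pbar y * (if i = j then (1:ℝ) else 0) - K.TE y i j) x
      = (if i = j then -pd j K.pbar x else 0)
        - (pd i K.ι x * pd j (fun y => K.ρ y * K.dφg y j) x
            + K.ρ x * K.dφg x j * pd i (fun y => pd j K.ι y) x) := by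
    intro j
    rw [show (fun y => -K.pbar y * (if i = j then (1:ℝ) else 0) - K.TE y i j)
        = fun y => -K.pbar y * (if i = j then (1:ℝ) else 0) - pd i K.ι y * (K.ρ y * K.dφg y j)
        from rfl,
      pd_sub ((hpbarx.neg.mul contDiffAt_const).differentiableAt one_le_top)
        (((hpdι i).mul (hFx j)).differentiableAt one_le_top) j,
      hdiag j,
      pd_mul ((hpdι i).differentiableAt one_le_top) ((hFx j).differentiableAt one_le_top) j,
      pd_symm hιx j i]
  have hbalE : K.ρ x * ∑ j, pd j (fun y => K.v y i) x * K.v x j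
      = -pd i K.pbar x - (pd i K.ι x * K.divρg x
          + ∑ j, K.ρ x * K.dφg x j * pd i (fun y => pd j K.ι y) x) := by
    rw [hbal x hx i, Finset.sum_congr rfl (fun j _ => hrhs j),
      Finset.sum_sub_distrib, Finset.sum_add_distrib, ← Finset.mul_sum]
    congr 1
    simp
  have hchain : pd i (fun y => K.φ (K.pt y)) x
      = pd i K.ι x * K.dφι x + (∑ j, pd i (fun y => pd j K.ι y) x * K.dφg x j)
        + pd i K.η x * K.temp x :=
    pd_comp3 (a := K.ι) (b := fun y j => pd j K.ι y) (c := K.η) K.hφ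
      (hιx.differentiableAt one_le_top) (fun j => (hpdι j).differentiableAt one_le_top)
      (hηx.differentiableAt one_le_top) i
  have hξ' : pd i K.ξ x
      = (pd i K.ι x * K.dφι x + (∑ j, pd i (fun y => pd j K.ι y) x * K.dφg x j)
          + pd i K.η x * K.temp x)
        - (K.ι x * pd i K.dφι x + K.dφι x * pd i K.ι x)
        - pd i (fun y => ∑ j, K.dφg y j * pd j K.ι y) x := by
    rw [show pd i K.ξ x
        = pd i (fun y => K.φ (K.pt y) - K.ι y * K.dφι y - ∑ j, K.dφg y j * pd j K.ι y) x
        from rfl,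
      pd_sub ((hφptx.sub (hιx.mul hdφιx)).differentiableAt one_le_top)
        (hGx.differentiableAt one_le_top) i,
      pd_sub (hφptx.differentiableAt one_le_top)
        ((hιx.mul hdφιx).differentiableAt one_le_top) i,
      pd_mul (hιx.differentiableAt one_le_top) (hdφιx.differentiableAt one_le_top) i,
      hchain]
  have hsq : ∀ k : Fin 3, pd i (fun y => K.v y k ^ 2) x
      = K.v x k * pd i (fun y => K.v y k) x + K.v x k * pd i (fun y => K.v y k) x := by
    intro k
    rw [show (fun y => K.v y k ^ 2) = fun y => K.v y k * K.v y k
        from funext fun y => pow_two (K.v y k)]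
    exact pd_mul ((hvx k).differentiableAt one_le_top) ((hvx k).differentiableAt one_le_top) i
  have hh' : pd i K.htot x
      = 1 / 2 * (∑ k, (K.v x k * pd i (fun y => K.v y k) x + K.v x k * pd i (fun y => K.v y k) x))
        + pd i K.ξ x := by
    have hξx : ContDiffAt ℝ (⊤:ℕ∞) K.ξ x := (hφptx.sub (hιx.mul hdφιx)).sub hGx
    rw [show pd i K.htot x = pd i (fun y => 1 / 2 * (∑ k, K.v y k ^ 2) + K.ξ y) x from rfl,
      pd_add ((contDiffAt_const.mul (ContDiffAt.sum fun k _ =>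
        (hvx k).pow 2)).differentiableAt one_le_top) (hξx.differentiableAt one_le_top) i,
      pd_const_mul ((ContDiffAt.sum fun (k : Fin 3) _ =>
        (hvx k).pow 2).differentiableAt one_le_top) (1/2) i,
      pd_sum (fun k _ => ((hvx k).pow 2).differentiableAt one_le_top) i,
      Finset.sum_congr rfl (fun k _ => hsq k)]
  have hRHS : pd i (fun y => (K.ι y) ^ 2 * K.divρg y + ∑ j, K.dφg y j * pd j K.ι y) x
      = (K.ι x * K.ι x * pd i K.divρg x
          + K.divρg x * (K.ι x * pd i K.ι x + K.ι x * pd i K.ι x))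
        + pd i (fun y => ∑ j, K.dφg y j * pd j K.ι y) x := by
    rw [show (fun y => (K.ι y) ^ 2 * K.divρg y + ∑ j, K.dφg y j * pd j K.ι y)
        = fun y => (K.ι y * K.ι y) * K.divρg y + ∑ j, K.dφg y j * pd j K.ι y
        from funext fun y => by rw [pow_two],
      pd_add (((hιx.mul hιx).mul hdivx).differentiableAt one_le_top)
        (hGx.differentiableAt one_le_top) i,
      pd_mul ((hιx.mul hιx).differentiableAt one_le_top) (hdivx.differentiableAt one_le_top) i,
      pd_mul (hιx.differentiableAt one_le_top) (hιx.differentiableAt one_le_top) i]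
  have hI : -(1 / 2 * (∑ k, (K.v x k * pd i (fun y => K.v y k) x
          + K.v x k * pd i (fun y => K.v y k) x)))
        - (∑ j, pd i (fun y => pd j K.ι y) x * K.dφg x j) + K.ι x * pd i K.dφι x
      = K.ι x * K.ι x * pd i K.divρg x
        + K.divρg x * (K.ι x * pd i K.ι x + K.ι x * pd i K.ι x)
        - K.ι x * pd i (fun y => (∑ j, K.v y j * pd j K.Pi' y) - K.dχι y) x := by
    linear_combination hcancel x hx i + hh' + hξ' + hRHS
  set P' : ℝ := pd i (fun y => (∑ j, K.v y j * pd j K.Pi' y) - K.dχι y) x with hP'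
  have hcross : cross (curl K.v x) (K.v x) i
      = (∑ j, pd j (fun y => K.v y i) x * K.v x j)
        - ∑ k, K.v x k * pd i (fun y => K.v y k) x := by
    fin_cases i <;> simp [cross, curl, Fin.sum_univ_three] <;> ring
  have hkey : K.ρ x * ((∑ j, pd j (fun y => K.v y i) x * K.v x j)
      - ∑ k, K.v x k * pd i (fun y => K.v y k) x) = 0 := by
    simp only [Fin.sum_univ_three] at hbalE hpbar' hI ⊢
    linear_combination hbalE - hpbar' + K.ρ x * hI
      + (-pd i K.dφι x + K.ι x * pd i K.divρg x + 2 * K.divρg x * pd i K.ι x - P') * hρι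
  rw [hcross]
  exact (mul_eq_zero.mp hkey).resolve_left hρne
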